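/- Let f : V × V → ℝ≥0 satisfy the triangle inequality, R ⊆ V a nonempty set of refueling stations, F > 0 a fuel capacity, and for each j ∈ V define t(j) = min_{r∈R} f(j,r). If x(i,j) represents the fuel consumed upon arriving at j via edge (i,j) on a feasible route that must be able to reach some refueling station from j without exceeding capacity F, then the constraint x(i,j) ≤ F implied by capacity can be strengthened to x(i,j) ≤ F − t(j): any feasible value of x(i,j) satisfying 'x(i,j) + (fuel from j to the next refueling visit) ≤ F' must satisfy x(i,j) ≤ F − t(j). -/
import Mathlib

lemma path_bound {V : Type*} (f : V → V → ℝ)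
    (htri : ∀ i j k, f i k ≤ f i j + f j k) (w : ℕ → V) :
    ∀ m, 1 ≤ m → f (w 0) (w m) ≤ ∑ k ∈ Finset.range m, f (w k) (w (k + 1)) := by
  intro m
  induction m with
  | zero => omega
  | succ n ih =>
    intro _
    rcases Nat.eq_or_lt_of_le (Nat.one_le_iff_ne_zero.mpr (Nat.succ_ne_zero n)) with h | h
    · obtain rfl : n = 0 := by omega
      simp
    · have hn : 1 ≤ n := by omega
      calc f (w 0) (w (n+1)) ≤ f (w 0) (w n) + f (w n) (w (n+1)) := htri _ _ _
        _ ≤ (∑ k ∈ Finset.range n, f (w k) (w (k+1))) + f (w n) (w (n+1)) := by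
            linarith [ih hn]
        _ = ∑ k ∈ Finset.range (n+1), f (w k) (w (k+1)) := (Finset.sum_range_succ _ _).symm

theorem stmt_11 {V : Type*} [Fintype V] (f : V → V → ℝ)
    (hnn : ∀ i j, 0 ≤ f i j)
    (htri : ∀ i j k, f i k ≤ f i j + f j k)
    (R : Finset V) (hR : R.Nonempty) (F : ℝ) (j : V) (x : ℝ)
    (w : ℕ → V) (m : ℕ) (hm : 1 ≤ m) (h0 : w 0 = j) (hend : w m ∈ R)
    (hcap : x + (∑ k ∈ Finset.range m, f (w k) (w (k + 1))) ≤ F) :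
    x ≤ F - R.inf' hR (fun r => f j r) := by
  have h1 : R.inf' hR (fun r => f j r) ≤ f j (w m) := Finset.inf'_le _ hend
  have h2 := path_bound f htri w m hm
  rw [h0] at h2
  linarith
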